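/- arXiv:1210.7734 — 4 statements merged into one kernel-verified Lean document; each statement's English description precedes it below -/
import Mathlib

section
/- For nonnegative integers j, k and integer n ≥ 1, ∫_0^∞ x^{n-1} e^{-2x} L_j^{(n-1)}(x) L_k^{(n-1)}(x) dx = Γ(j+k+n) / (j! · k! · 2^{j+k+n}). -/
open scoped BigOperators
open MeasureTheory Real

noncomputable def genBinom (a : ℝ) (k : ℕ) : ℝ :=
  (∏ i ∈ Finset.range k, (a - i)) / (Nat.factorial k)

noncomputable def lag (j : ℕ) (α : ℝ) (x : ℝ) : ℝ :=
  ∑ i ∈ Finset.range (j + 1),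
    (-1 : ℝ) ^ i * genBinom ((j : ℝ) + α) (j - i) * x ^ i / (Nat.factorial i)

section Aux
open Finset Set


lemma lemF : ∀ (N : ℕ), ∀ (b r : ℕ), N ≤ b + r →
    ∑ i ∈ range (r+1), (-1 : ℤ)^i * (Nat.choose N (r-i)) * (Nat.choose (b+i) i)
      = (-1)^r * (Nat.choose (b + r - N) r) := by
  intro N
  induction N with
  | zero =>
    intro b r _
    rw [Finset.sum_eq_single r]
    · simp
    · intro i hi hne
      have : r - i ≠ 0 := by
        simp only [Finset.mem_range] at hi; omega
      rcases Nat.exists_eq_succ_of_ne_zero this with ⟨m, hm⟩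
      simp [hm, Nat.choose]
    · intro h; simp at h
  | succ N ih =>
    intro b r hN
    rcases Nat.eq_zero_or_pos r with rfl | hr
    · simp
    obtain ⟨r', rfl⟩ := Nat.exists_eq_succ_of_ne_zero hr.ne'
    simp only [Nat.succ_eq_add_one] at hN ⊢
    set d := b + r' - N with hdd
    have hd : b + (r'+1) - (N+1) = d := by omega
    have hd2 : b + (r'+1) - N = d + 1 := by omega
    rw [Finset.sum_range_succ]
    have hsplit : ∀ i ∈ range (r'+1),
        (-1 : ℤ)^i * (Nat.choose (N+1) (r'+1-i)) * (Nat.choose (b+i) i)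
        = (-1:ℤ)^i * (Nat.choose N (r'-i)) * (Nat.choose (b+i) i)
          + (-1:ℤ)^i * (Nat.choose N (r'+1-i)) * (Nat.choose (b+i) i) := by
      intro i hi
      simp only [Finset.mem_range] at hi
      have h1 : r' + 1 - i = (r' - i) + 1 := by omega
      have h2 : r' - i + 1 = r' + 1 - i := by omega
      have h3 : Nat.choose (N+1) (r'+1-i) = Nat.choose N (r'-i) + Nat.choose N (r'+1-i) := by
        rw [h1, Nat.choose_succ_succ, Nat.succ_eq_add_one, h2]
      rw [h3]
      push_cast
      ring
    rw [Finset.sum_congr rfl hsplit, Finset.sum_add_distrib]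
    have e1 := ih b r' (by omega)
    rw [← hdd] at e1
    have e2 : ∑ i ∈ range (r'+1), (-1:ℤ)^i * (Nat.choose N (r'+1-i)) * (Nat.choose (b+i) i)
        + (-1:ℤ)^(r'+1) * (Nat.choose (b+(r'+1)) (r'+1))
        = (-1)^(r'+1) * (Nat.choose (d+1) (r'+1)) := by
      have h := ih b (r'+1) (by omega)
      rw [Finset.sum_range_succ, hd2] at h
      simpa using h
    have hT : r' + 1 - (r'+1) = 0 := Nat.sub_self _
    rw [hT, Nat.choose_zero_right, hd]
    have hp : (((d+1).choose (r'+1) : ℤ)) = (d.choose r') + (d.choose (r'+1)) := by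
      push_cast [Nat.choose_succ_succ]; ring
    push_cast at e1 e2 hp ⊢
    linear_combination e1 + e2 + (-1:ℤ)^(r'+1) * hp



lemma lemA (a j l : ℕ) :
    ∑ i ∈ range (j+1), (-1:ℤ)^i * (Nat.choose (j+a) (j-i)) * (Nat.choose (a+l+i) i) * 2^(j-i)
    = ∑ m ∈ range (j+1), (-1:ℤ)^m * (Nat.choose (a+j) (j-m)) * (Nat.choose l m) := by
  have step1 : ∀ i ∈ range (j+1),
      (-1:ℤ)^i * (Nat.choose (j+a) (j-i)) * (Nat.choose (a+l+i) i) * 2^(j-i)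
      = ∑ s ∈ range (j+1),
          (-1:ℤ)^i * (Nat.choose (j+a) (j-i)) * (Nat.choose (a+l+i) i) * (Nat.choose (j-i) s) := by
    intro i hi
    rw [← Finset.mul_sum]
    congr 1
    have h2 : ((2:ℤ))^(j-i) = ((2^(j-i) : ℕ) : ℤ) := by push_cast; ring
    rw [h2, ← Nat.sum_range_choose (j-i)]
    push_cast
    refine Finset.sum_subset (Finset.range_subset_range.2 (by omega)) ?_
    intro s hs hns
    simp only [Finset.mem_range] at hs hns
    rw [Nat.choose_eq_zero_of_lt (by omega)]
    simp
  rw [Finset.sum_congr rfl step1, Finset.sum_comm]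
  have step2 : ∀ s ∈ range (j+1),
      (∑ i ∈ range (j+1),
        (-1:ℤ)^i * (Nat.choose (j+a) (j-i)) * (Nat.choose (a+l+i) i) * (Nat.choose (j-i) s))
      = (Nat.choose (j+a) s) * ((-1:ℤ)^(j-s) * (Nat.choose l (j-s))) := by
    intro s hs
    simp only [Finset.mem_range] at hs
    rw [← Finset.sum_subset (Finset.range_subset_range.2 (show j-s+1 ≤ j+1 by omega))]
    · have hre : ∀ i ∈ range (j-s+1),
          (-1:ℤ)^i * (Nat.choose (j+a) (j-i)) * (Nat.choose (a+l+i) i) * (Nat.choose (j-i) s)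
          = (Nat.choose (j+a) s) *
            ((-1:ℤ)^i * (Nat.choose (j+a-s) (j-s-i)) * (Nat.choose (a+l+i) i)) := by
        intro i hi
        simp only [Finset.mem_range] at hi
        have key : Nat.choose (j+a) (j-i) * Nat.choose (j-i) s
            = Nat.choose (j+a) s * Nat.choose (j+a-s) (j-i-s) :=
          Nat.choose_mul (n := j+a) (k := j-i) (s := s) (by omega)
        have hji : j - i - s = j - s - i := by omega
        rw [hji] at key
        have : (((Nat.choose (j+a) (j-i)) : ℤ)) * (Nat.choose (j-i) s)
            = ((Nat.choose (j+a) s : ℤ)) * (Nat.choose (j+a-s) (j-s-i)) := by exact_mod_cast key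
        linear_combination ((-1:ℤ)^i * (Nat.choose (a+l+i) i)) * this
      rw [Finset.sum_congr rfl hre, ← Finset.mul_sum]
      congr 1
      have := lemF (j+a-s) (a+l) (j-s) (by omega)
      have hl : a + l + (j-s) - (j+a-s) = l := by omega
      rw [hl] at this
      rw [this]
    · intro i hi hni
      simp only [Finset.mem_range] at hi hni
      rw [Nat.choose_eq_zero_of_lt (show j - i < s by omega)]
      simp
  rw [Finset.sum_congr rfl step2]
  have := Finset.sum_range_reflect
    (fun m => (-1:ℤ)^m * (Nat.choose (a+j) (j-m)) * (Nat.choose l m)) (j+1)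
  rw [← this]
  apply Finset.sum_congr rfl
  intro s hs
  simp only [Finset.mem_range] at hs
  have h1 : j + 1 - 1 - s = j - s := by omega
  have h2 : j - (j - s) = s := by omega
  rw [h1, h2, Nat.add_comm j a]
  ring



lemma csa (p q : ℕ) : (p+q).choose p = (p+q).choose q := by
  have h := Nat.choose_symm (Nat.le_add_right p q)
  rw [Nat.add_sub_cancel_left] at h
  exact h.symm

lemma trin (a l m : ℕ) :
    Nat.choose (a+l) l * Nat.choose l m = Nat.choose (a+m) m * Nat.choose (a+l) (a+m) := by
  rcases le_or_gt m l with h | h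
  · have key := Nat.choose_mul (n := a+l) (k := a+m) (s := a) (show a ≤ a+m by omega)
    rw [Nat.add_sub_cancel_left, Nat.add_sub_cancel_left] at key
    have s1 : Nat.choose (a+m) a = Nat.choose (a+m) m := by
      rw [← Nat.choose_symm (show m ≤ a+m by omega), Nat.add_sub_cancel]
    have s2 : Nat.choose (a+l) a = Nat.choose (a+l) l := by
      rw [← Nat.choose_symm (show l ≤ a+l by omega), Nat.add_sub_cancel]
    rw [s1, s2] at key
    rw [mul_comm] at key
    rw [← key]
  · rw [Nat.choose_eq_zero_of_lt h, Nat.choose_eq_zero_of_lt (show a+l < a+m by omega)]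
    ring

lemma lemC (a j k : ℕ) :
    ∑ i ∈ range (j+1), ∑ l ∈ range (k+1),
      (-1:ℤ)^(i+l) * (Nat.choose (j+a) (j-i)) * (Nat.choose (k+a) (k-l))
        * ((Nat.choose (a+l) l) * (Nat.choose (a+l+i) i)) * 2^((j-i)+(k-l))
    = (Nat.choose (a+j) j) * (Nat.choose (a+j+k) k) := by
  rw [Finset.sum_comm]
  have step2 : ∀ l ∈ range (k+1),
      (∑ i ∈ range (j+1),
        (-1:ℤ)^(i+l) * (Nat.choose (j+a) (j-i)) * (Nat.choose (k+a) (k-l))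
        * ((Nat.choose (a+l) l) * (Nat.choose (a+l+i) i)) * 2^((j-i)+(k-l)))
      = ∑ m ∈ range (j+1),
          ((-1:ℤ)^l * (Nat.choose (k+a) (k-l)) * (Nat.choose (a+l) l) * 2^(k-l))
            * ((-1:ℤ)^m * (Nat.choose (a+j) (j-m)) * (Nat.choose l m)) := by
    intro l _
    rw [← Finset.mul_sum, ← lemA a j l, Finset.mul_sum]
    apply Finset.sum_congr rfl
    intro i _
    rw [pow_add, pow_add]
    ring
  rw [Finset.sum_congr rfl step2, Finset.sum_comm]
  have step4 : ∀ m ∈ range (j+1),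
      (∑ l ∈ range (k+1),
        ((-1:ℤ)^l * (Nat.choose (k+a) (k-l)) * (Nat.choose (a+l) l) * 2^(k-l))
          * ((-1:ℤ)^m * (Nat.choose (a+j) (j-m)) * (Nat.choose l m)))
      = ((Nat.choose (a+j) (j-m)) * (Nat.choose (a+m) m) : ℤ)
          * (if m ≤ k then (Nat.choose (a+k) (k-m)) else 0) := by
    intro m _
    have hterm : ∀ l ∈ range (k+1),
        ((-1:ℤ)^l * (Nat.choose (k+a) (k-l)) * (Nat.choose (a+l) l) * 2^(k-l))
          * ((-1:ℤ)^m * (Nat.choose (a+j) (j-m)) * (Nat.choose l m))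
        = ((Nat.choose (a+j) (j-m)) * (Nat.choose (a+m) m) : ℤ)
            * ((-1:ℤ)^(l+m) * (Nat.choose (k+a) (k-l)) * (Nat.choose (a+l) (a+m)) * 2^(k-l)) := by
      intro l _
      have := trin a l m
      have hc : ((Nat.choose (a+l) l * Nat.choose l m : ℕ) : ℤ)
          = ((Nat.choose (a+m) m * Nat.choose (a+l) (a+m) : ℕ) : ℤ) := by exact_mod_cast this
      push_cast at hc
      rw [pow_add]
      linear_combination ((-1:ℤ)^l * (-1:ℤ)^m * (Nat.choose (k+a) (k-l)) * 2^(k-l)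
        * (Nat.choose (a+j) (j-m))) * hc
    rw [Finset.sum_congr rfl hterm, ← Finset.mul_sum]
    congr 1
    -- inner sum over l
    rcases le_or_gt m k with hm | hm
    · rw [if_pos hm]
      have hk1 : k + 1 = m + ((k - m) + 1) := by omega
      rw [hk1, Finset.sum_range_add]
      have hzero : ∀ l ∈ range m,
          (-1:ℤ)^(l+m) * (Nat.choose (k+a) (k-l)) * (Nat.choose (a+l) (a+m)) * 2^(k-l) = 0 := by
        intro l hl
        simp only [Finset.mem_range] at hl
        rw [Nat.choose_eq_zero_of_lt (show a+l < a+m by omega)]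
        simp
      rw [Finset.sum_congr rfl hzero, Finset.sum_const, smul_zero, zero_add]
      have hre : ∀ t ∈ range ((k-m)+1),
          (-1:ℤ)^((m+t)+m) * (Nat.choose (k+a) (k-(m+t))) * (Nat.choose (a+(m+t)) (a+m)) * 2^(k-(m+t))
          = (-1:ℤ)^t * (Nat.choose ((k-m)+(a+m)) ((k-m)-t)) * (Nat.choose ((a+m)+0+t) t) * 2^((k-m)-t) := by
        intro t ht
        simp only [Finset.mem_range] at ht
        have e1 : (k - (m+t)) = (k-m) - t := by omega
        have e2 : (k-m) + (a+m) = k + a := by omega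
        have e3 : Nat.choose (a+(m+t)) (a+m) = Nat.choose ((a+m)+0+t) t := by
          rw [show a+(m+t) = (a+m)+t from by omega, show (a+m)+0+t = (a+m)+t from by omega]
          exact csa (a+m) t
        rw [e1, e2, e3]
        have e4 : (-1:ℤ)^(m+t+m) = (-1:ℤ)^t := by
          rw [show m+t+m = t + 2*m by omega, pow_add]
          simp [pow_mul]
        rw [e4]
      rw [Finset.sum_congr rfl hre, lemA (a+m) (k-m) 0]
      rw [Finset.sum_eq_single 0]
      · simp only [Nat.choose_zero_right, pow_zero, Nat.sub_zero, Nat.cast_one]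
        have : (a+m) + (k-m) = a + k := by omega
        rw [this]
        ring
      · intro m' _ hne
        rcases Nat.exists_eq_succ_of_ne_zero hne with ⟨w, hw⟩
        simp [hw, Nat.choose]
      · intro h; simp at h
    · rw [if_neg (by omega)]
      apply Finset.sum_eq_zero
      intro l hl
      simp only [Finset.mem_range] at hl
      rw [Nat.choose_eq_zero_of_lt (show a+l < a+m by omega)]
      simp
  rw [Finset.sum_congr rfl step4]
  have hfin : ∀ m ∈ range (j+1),
      ((Nat.choose (a+j) (j-m)) * (Nat.choose (a+m) m) : ℤ)
          * (((if m ≤ k then (Nat.choose (a+k) (k-m)) else 0) : ℕ) : ℤ)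
      = ((Nat.choose (a+j) j) : ℤ) *
          ((Nat.choose j m) * (((if m ≤ k then (Nat.choose (a+k) (k-m)) else 0) : ℕ) : ℤ)) := by
    intro m hm
    simp only [Finset.mem_range] at hm
    have h1 : Nat.choose (a+j) (j-m) = Nat.choose (a+j) (a+m) := by
      rw [← Nat.choose_symm (show a+m ≤ a+j by omega)]
      congr 1
      omega
    have h2 := trin a j m
    have hc : ((Nat.choose (a+j) j : ℤ)) * ((Nat.choose j m : ℤ))
        = ((Nat.choose (a+m) m : ℤ)) * ((Nat.choose (a+j) (a+m) : ℤ)) := by exact_mod_cast h2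
    rw [h1]
    linear_combination (((if m ≤ k then (Nat.choose (a+k) (k-m)) else 0 : ℕ) : ℤ)) * hc.symm
  rw [Finset.sum_congr rfl hfin, ← Finset.mul_sum]
  congr 1
  have vdm := Nat.add_choose_eq j (a+k) k
  rw [Finset.Nat.sum_antidiagonal_eq_sum_range_succ_mk] at vdm
  have hgoal : ∑ m ∈ range (j+1),
      ((Nat.choose j m : ℤ)) * (((if m ≤ k then (Nat.choose (a+k) (k-m)) else 0 : ℕ)) : ℤ)
      = ∑ m ∈ range (j+k+1),
      ((Nat.choose j m : ℤ)) * (((if m ≤ k then (Nat.choose (a+k) (k-m)) else 0 : ℕ)) : ℤ) := by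
    apply Finset.sum_subset (Finset.range_subset_range.2 (by omega))
    intro m _ hnm
    simp only [Finset.mem_range] at hnm
    rw [Nat.choose_eq_zero_of_lt (by omega)]
    simp
  have hgoal2 : ∑ m ∈ range (k+1),
      ((Nat.choose j m : ℤ)) * ((Nat.choose (a+k) (k-m)):ℤ)
      = ∑ m ∈ range (j+k+1),
      ((Nat.choose j m : ℤ)) * (((if m ≤ k then (Nat.choose (a+k) (k-m)) else 0 : ℕ)) : ℤ) := by
    rw [← Finset.sum_subset (Finset.range_subset_range.2 (show k+1 ≤ j+k+1 by omega))]
    · apply Finset.sum_congr rfl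
      intro m hm
      simp only [Finset.mem_range] at hm
      rw [if_pos (by omega)]
    · intro m _ hnm
      simp only [Finset.mem_range] at hnm
      rw [if_neg (by omega)]
      simp
  rw [hgoal, ← hgoal2]
  have hakj : a + j + k = j + (a+k) := by omega
  rw [hakj, vdm]
  push_cast
  rfl


lemma integrable_mono_exp (m : ℕ) :
    IntegrableOn (fun x : ℝ => x ^ m * Real.exp (-2 * x)) (Ioi 0) := by
  have h := integrableOn_rpow_mul_exp_neg_mul_rpow (p := 1) (s := (m:ℝ)) (b := 2)
    (neg_one_lt_zero.trans_le (Nat.cast_nonneg m)) one_pos two_pos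
  apply h.congr_fun ?_ measurableSet_Ioi
  intro x hx
  simp only [Real.rpow_one, Real.rpow_natCast]

lemma moment_integral (m : ℕ) :
    ∫ x in Ioi (0:ℝ), x ^ m * Real.exp (-2 * x)
      = (Nat.factorial m : ℝ) / 2 ^ (m+1) := by
  have h := integral_rpow_mul_exp_neg_mul_Ioi (a := (m:ℝ)+1) (r := 2) (by positivity) two_pos
  rw [show ((m:ℝ)+1-1) = (m:ℝ) by ring, Real.Gamma_nat_eq_factorial] at h
  have congr1 : ∫ x in Ioi (0:ℝ), x ^ m * Real.exp (-2 * x)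
      = ∫ x in Ioi (0:ℝ), x ^ ((m:ℝ)) * Real.exp (-(2 * x)) := by
    apply setIntegral_congr_fun measurableSet_Ioi
    intro x _
    simp only [Real.rpow_natCast]
    ring_nf
  rw [congr1, h]
  rw [show ((m:ℝ)+1) = ((m+1 : ℕ) : ℝ) by push_cast; ring, Real.rpow_natCast]
  rw [div_pow, one_pow]
  ring

lemma genBinom_nat (m q : ℕ) : genBinom (m : ℝ) q = (Nat.choose m q : ℝ) := by
  unfold genBinom
  rcases le_or_gt q m with h | h
  · have hp : ∏ i ∈ Finset.range q, ((m:ℝ) - i) = ((m.descFactorial q : ℕ) : ℝ) := by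
      rw [Nat.descFactorial_eq_prod_range, Nat.cast_prod]
      apply Finset.prod_congr rfl
      intro i hi
      simp only [Finset.mem_range] at hi
      rw [Nat.cast_sub (by omega)]
    rw [hp, Nat.descFactorial_eq_factorial_mul_choose]
    push_cast
    rw [mul_comm, mul_div_assoc, div_self (by exact_mod_cast (Nat.factorial_pos q).ne'), mul_one]
  · rw [Finset.prod_eq_zero (Finset.mem_range.2 h) (by rw [sub_self]),
      Nat.choose_eq_zero_of_lt h]
    simp

lemma lag_eq (a x : ℝ) (j : ℕ) (b : ℕ) (hb : (b : ℝ) = a) :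
    lag j a x = ∑ i ∈ Finset.range (j+1),
      (-1:ℝ)^i * (Nat.choose (j + b) (j - i) : ℝ) * x ^ i / (Nat.factorial i) := by
  unfold lag
  apply Finset.sum_congr rfl
  intro i _
  rw [← hb, show ((j:ℝ) + (b:ℝ)) = ((j + b : ℕ) : ℝ) by push_cast; ring, genBinom_nat]

end Aux

section Main
open Finset Set

theorem laguerre_product_integral_b_two (n : ℕ) (hn : 1 ≤ n) (j k : ℕ) :
    ∫ x in Set.Ioi (0 : ℝ),
        x ^ ((n : ℝ) - 1) * Real.exp (-2 * x) * lag j ((n : ℝ) - 1) x * lag k ((n : ℝ) - 1) x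
      = Real.Gamma ((j : ℝ) + k + n) /
          ((Nat.factorial j) * (Nat.factorial k) * 2 ^ (j + k + n)) := by
  obtain ⟨a, rfl⟩ : ∃ a, n = a + 1 := ⟨n - 1, by omega⟩
  have hcast : ((a + 1 : ℕ) : ℝ) - 1 = (a : ℝ) := by push_cast; ring
  -- coefficient function
  set F : ℕ → ℕ → ℝ := fun i l =>
    (-1:ℝ)^(i+l) * (Nat.choose (j+a) (j-i) : ℝ) * (Nat.choose (k+a) (k-l) : ℝ)
      / ((Nat.factorial i : ℝ) * (Nat.factorial l : ℝ)) with hF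
  have key : ∀ x ∈ Ioi (0:ℝ),
      x ^ (((a + 1 : ℕ) : ℝ) - 1) * Real.exp (-2 * x)
        * lag j (((a + 1 : ℕ) : ℝ) - 1) x * lag k (((a + 1 : ℕ) : ℝ) - 1) x
      = ∑ l ∈ range (k+1), ∑ i ∈ range (j+1),
          F i l * (x ^ (a+i+l) * Real.exp (-2 * x)) := by
    intro x _
    rw [hcast, Real.rpow_natCast, lag_eq ((a:ℝ)) x j a rfl, lag_eq ((a:ℝ)) x k a rfl]
    rw [Finset.mul_sum]
    apply Finset.sum_congr rfl
    intro l _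
    rw [Finset.mul_sum, Finset.sum_mul]
    apply Finset.sum_congr rfl
    intro i _
    rw [hF]
    simp only
    field_simp
    ring
  rw [setIntegral_congr_fun measurableSet_Ioi key]
  rw [MeasureTheory.integral_finset_sum _ (fun l _ => integrable_finset_sum _
    (fun i _ => ((integrable_mono_exp (a+i+l)).const_mul (F i l))))]
  have inner : ∀ l ∈ range (k+1),
      (∫ x in Ioi (0:ℝ), ∑ i ∈ range (j+1), F i l * (x ^ (a+i+l) * Real.exp (-2 * x)))
      = ∑ i ∈ range (j+1), F i l * ((Nat.factorial (a+i+l) : ℝ) / 2 ^ (a+i+l+1)) := by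
    intro l _
    rw [MeasureTheory.integral_finset_sum _
      (fun i _ => ((integrable_mono_exp (a+i+l)).const_mul (F i l)))]
    apply Finset.sum_congr rfl
    intro i _
    rw [MeasureTheory.integral_const_mul, moment_integral]
  rw [Finset.sum_congr rfl inner]
  -- now pure algebra
  have hC : (∑ i ∈ range (j+1), ∑ l ∈ range (k+1),
      (-1:ℝ)^(i+l) * (Nat.choose (j+a) (j-i) : ℝ) * (Nat.choose (k+a) (k-l) : ℝ)
        * ((Nat.choose (a+l) l : ℝ) * (Nat.choose (a+l+i) i : ℝ)) * 2^((j-i)+(k-l)))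
      = (Nat.choose (a+j) j : ℝ) * (Nat.choose (a+j+k) k : ℝ) := by
    exact_mod_cast lemC a j k
  rw [Finset.sum_comm] at hC
  have termwise : ∀ i ∈ range (j+1), ∀ l ∈ range (k+1),
      F i l * ((Nat.factorial (a+i+l) : ℝ) / 2 ^ (a+i+l+1))
      = ((-1:ℝ)^(i+l) * (Nat.choose (j+a) (j-i) : ℝ) * (Nat.choose (k+a) (k-l) : ℝ)
        * ((Nat.choose (a+l) l : ℝ) * (Nat.choose (a+l+i) i : ℝ)) * 2^((j-i)+(k-l)))
        * ((Nat.factorial a : ℝ) / 2 ^ (j+k+a+1)) := by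
    intro i hi l hl
    simp only [Finset.mem_range] at hi hl
    have hfact : ((Nat.factorial (a+i+l) : ℝ))
        = (Nat.choose (a+l) l : ℝ) * (Nat.choose (a+l+i) i : ℝ)
          * (Nat.factorial a : ℝ) * (Nat.factorial i : ℝ) * (Nat.factorial l : ℝ) := by
      have h1 : Nat.choose (a+l) l * (Nat.factorial a) * (Nat.factorial l)
          = Nat.factorial (a+l) := Nat.add_choose_mul_factorial_mul_factorial a l
      have h2 : Nat.choose (a+l+i) i * (Nat.factorial (a+l)) * (Nat.factorial i)
          = Nat.factorial (a+l+i) := Nat.add_choose_mul_factorial_mul_factorial (a+l) i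
      have h3 : a + i + l = a + l + i := by omega
      rw [h3, ← h2, ← h1]
      push_cast
      ring
    have hpow : ((2:ℝ)) ^ (j+k+a+1) = 2 ^ ((j-i)+(k-l)) * 2 ^ (a+i+l+1) := by
      rw [← pow_add]
      congr 1
      omega
    rw [hF]
    simp only
    rw [hfact, hpow]
    have hi0 : (Nat.factorial i : ℝ) ≠ 0 := by exact_mod_cast (Nat.factorial_pos i).ne'
    have hl0 : (Nat.factorial l : ℝ) ≠ 0 := by exact_mod_cast (Nat.factorial_pos l).ne'
    field_simp
  have hsum : ∀ l ∈ range (k+1),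
      ∑ i ∈ range (j+1), F i l * ((Nat.factorial (a+i+l) : ℝ) / 2 ^ (a+i+l+1))
      = ∑ i ∈ range (j+1),
        ((-1:ℝ)^(i+l) * (Nat.choose (j+a) (j-i) : ℝ) * (Nat.choose (k+a) (k-l) : ℝ)
        * ((Nat.choose (a+l) l : ℝ) * (Nat.choose (a+l+i) i : ℝ)) * 2^((j-i)+(k-l)))
        * ((Nat.factorial a : ℝ) / 2 ^ (j+k+a+1)) :=
    fun l hl => Finset.sum_congr rfl (fun i hi => termwise i hi l hl)
  rw [Finset.sum_congr rfl hsum]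
  simp only [← Finset.sum_mul]
  rw [hC]
  -- RHS
  have hGamma : Real.Gamma ((j:ℝ) + k + ((a+1:ℕ):ℝ)) = (Nat.factorial (j+k+a) : ℝ) := by
    rw [show ((j:ℝ) + k + ((a+1:ℕ):ℝ)) = ((j+k+a : ℕ) : ℝ) + 1 by push_cast; ring]
    exact Real.Gamma_nat_eq_factorial (j+k+a)
  rw [hGamma]
  have hfin : (Nat.choose (a+j) j : ℝ) * (Nat.choose (a+j+k) k : ℝ)
      * (Nat.factorial a : ℝ) * ((Nat.factorial j : ℝ) * (Nat.factorial k : ℝ))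
      = (Nat.factorial (j+k+a) : ℝ) := by
    have h1 := Nat.add_choose_mul_factorial_mul_factorial a j
    have h2 := Nat.add_choose_mul_factorial_mul_factorial (a+j) k
    have h3 : j + k + a = a + j + k := by omega
    rw [h3, ← h2, ← h1]
    push_cast
    ring
  rw [← hfin]
  have hj0 : (Nat.factorial j : ℝ) ≠ 0 := by exact_mod_cast (Nat.factorial_pos j).ne'
  have hk0 : (Nat.factorial k : ℝ) ≠ 0 := by exact_mod_cast (Nat.factorial_pos k).ne'
  have h20 : ((2:ℝ)) ^ (j+k+(a+1)) ≠ 0 := by positivity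
  have hexp : j + k + (a+1) = j + k + a + 1 := by omega
  rw [hexp]
  field_simp

end Main
end

section
/- For Re(β) > -1, Re(s) > 0, α > -1 and nonnegative integer j, ∫_0^∞ e^{-sx} x^β L_j^{(α)}(x) dx = Γ(β+1) Γ(α+j+1) / (j! Γ(α+1)) · s^{-(β+1)} · ₂F₁(-j, β+1; α+1; 1/s). -/
open scoped BigOperators
open MeasureTheory

noncomputable def pochC (a : ℂ) (i : ℕ) : ℂ := ∏ t ∈ Finset.range i, (a + t)

/-- Terminating Gauss hypergeometric sum `₂F₁(-j, b; c; x)` over ℂ. -/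
noncomputable def hyp2F1C (j : ℕ) (b c x : ℂ) : ℂ :=
  ∑ i ∈ Finset.range (j + 1),
    pochC (-(j : ℂ)) i * pochC b i / (pochC c i * (Nat.factorial i)) * x ^ i

section Aux
open Set Complex

lemma integrableOn_cpow_cexp (a s : ℂ) (ha : 0 < a.re) (hs : 0 < s.re) :
    IntegrableOn (fun t : ℝ => (t : ℂ) ^ (a - 1) * Complex.exp (-s * t)) (Ioi 0) := by
  have hg : IntegrableOn (fun t : ℝ => t ^ (a.re - 1) * Real.exp (-s.re * t)) (Ioi 0) := by
    have := integrableOn_rpow_mul_exp_neg_mul_rpow (s := a.re - 1) (p := 1) (b := s.re)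
      (by linarith) zero_lt_one hs
    simpa [Real.rpow_one] using this
  have hmeas : AEStronglyMeasurable (fun t : ℝ => (t : ℂ) ^ (a - 1) * Complex.exp (-s * t))
      (volume.restrict (Ioi 0)) := by
    apply ContinuousOn.aestronglyMeasurable _ measurableSet_Ioi
    apply ContinuousOn.mul
    · apply ContinuousOn.cpow (Complex.continuous_ofReal.continuousOn) continuousOn_const
      intro t ht
      exact Or.inl (by simpa using ht)
    · exact (Complex.continuous_exp.comp (continuous_const.mul Complex.continuous_ofReal)).continuousOn
  refine Integrable.mono' hg hmeas ?_
  filter_upwards [ae_restrict_mem measurableSet_Ioi] with t ht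
  rw [norm_mul]
  have h1 : ‖(t : ℂ) ^ (a - 1)‖ = t ^ (a.re - 1) := by
    rw [Complex.norm_cpow_eq_rpow_re_of_pos ht]
    simp
  have h2 : ‖Complex.exp (-s * t)‖ = Real.exp (-s.re * t) := by
    rw [Complex.norm_exp]
    congr 1
    simp [Complex.mul_re]
  rw [h1, h2]

lemma integral_cpow_cexp (a : ℂ) (ha : 0 < a.re) {s : ℂ} (hs : 0 < s.re) :
    ∫ t in Ioi (0:ℝ), (t : ℂ) ^ (a - 1) * Complex.exp (-s * t)
      = Complex.Gamma a * s ^ (-a) := by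
  set U : Set ℂ := {z | 0 < z.re} with hU
  have hU_open : IsOpen U := isOpen_lt continuous_const Complex.continuous_re
  set f : ℂ → ℂ := fun z => ∫ t in Ioi (0:ℝ), (t : ℂ) ^ (a - 1) * Complex.exp (-z * t) with hf
  set g : ℂ → ℂ := fun z => Complex.Gamma a * z ^ (-a) with hg
  have hfd : DifferentiableOn ℂ f U := by
    intro z₀ hz₀
    have hz₀re : 0 < z₀.re := hz₀
    set ε : ℝ := z₀.re / 2 with hε
    have hεpos : 0 < ε := by positivity
    have key := hasDerivAt_integral_of_dominated_loc_of_deriv_le (μ := volume.restrict (Ioi 0))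
      (F := fun (z : ℂ) (t : ℝ) => (t : ℂ) ^ (a - 1) * Complex.exp (-z * t))
      (F' := fun (z : ℂ) (t : ℝ) => (t : ℂ) ^ (a - 1) * (-(t:ℂ) * Complex.exp (-z * t)))
      (x₀ := z₀) (bound := fun t : ℝ => t ^ a.re * Real.exp (-ε * t)) (Metric.ball_mem_nhds z₀ hεpos)
      ?_ ?_ ?_ ?_ ?_ ?_
    · exact (key.2.differentiableAt.differentiableWithinAt)
    · filter_upwards with z
      apply ContinuousOn.aestronglyMeasurable _ measurableSet_Ioi
      apply ContinuousOn.mul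
      · exact ContinuousOn.cpow (Complex.continuous_ofReal.continuousOn) continuousOn_const
          (fun t ht => Or.inl (by simpa using ht))
      · exact (Complex.continuous_exp.comp (continuous_const.mul Complex.continuous_ofReal)).continuousOn
    · exact integrableOn_cpow_cexp a z₀ ha hz₀re
    · apply ContinuousOn.aestronglyMeasurable _ measurableSet_Ioi
      apply ContinuousOn.mul
      · exact ContinuousOn.cpow (Complex.continuous_ofReal.continuousOn) continuousOn_const
          (fun t ht => Or.inl (by simpa using ht))
      · exact ((continuous_ofReal.neg).mul
          (Complex.continuous_exp.comp (continuous_const.mul Complex.continuous_ofReal))).continuousOn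
    · rw [ae_restrict_iff' measurableSet_Ioi]
      filter_upwards with t ht z hz
      have htpos : (0:ℝ) < t := ht
      have hzre : ε ≤ z.re := by
        have := Complex.abs_re_le_norm (z - z₀)
        have hdist : ‖z - z₀‖ < ε := by
          rwa [Metric.mem_ball, Complex.dist_eq] at hz
        have : |z.re - z₀.re| < ε := by
          calc |z.re - z₀.re| = |(z - z₀).re| := by simp
          _ ≤ ‖z - z₀‖ := Complex.abs_re_le_norm _
          _ < ε := hdist
        have := abs_lt.mp this
        simp only [hε] at *
        linarith [this.1]
      rw [norm_mul, norm_mul]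
      have h1 : ‖(t : ℂ) ^ (a - 1)‖ = t ^ (a.re - 1) := by
        rw [Complex.norm_cpow_eq_rpow_re_of_pos htpos]; simp
      have h2 : ‖Complex.exp (-z * t)‖ = Real.exp (-z.re * t) := by
        rw [Complex.norm_exp]; congr 1; simp [Complex.mul_re]
      have h3 : ‖(-(t:ℂ))‖ = t := by
        simp [abs_of_pos htpos]
      rw [h1, h2, h3]
      have hrw : t ^ (a.re - 1) * (t * Real.exp (-z.re * t)) = t ^ a.re * Real.exp (-z.re * t) := by
        rw [Real.rpow_sub_one htpos.ne']
        field_simp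
      rw [hrw]
      have : Real.exp (-z.re * t) ≤ Real.exp (-ε * t) := by
        apply Real.exp_le_exp.mpr
        nlinarith
      have hpow : (0:ℝ) ≤ t ^ a.re := Real.rpow_nonneg htpos.le _
      nlinarith [this, hpow]
    · have := integrableOn_rpow_mul_exp_neg_mul_rpow (s := a.re) (p := 1) (b := ε)
        (by linarith) zero_lt_one hεpos
      simpa [Real.rpow_one, IntegrableOn] using this
    · rw [ae_restrict_iff' measurableSet_Ioi]
      filter_upwards with t ht z hz
      have : HasDerivAt (fun z : ℂ => Complex.exp (-z * t)) (-(t:ℂ) * Complex.exp (-z * t)) z := by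
        have h0 : HasDerivAt (fun z : ℂ => -z * (t:ℂ)) (-(t:ℂ)) z := by
          simpa using ((hasDerivAt_id z).neg.mul_const (t:ℂ))
        simpa [mul_comm] using h0.cexp
      exact this.const_mul _
  have hgd : DifferentiableOn ℂ g U := by
    intro z hz
    apply DifferentiableWithinAt.const_mul
    apply DifferentiableAt.differentiableWithinAt
    exact (differentiableAt_id.cpow (differentiableAt_const _) (Or.inl hz))
  have hfa : AnalyticOnNhd ℂ f U := hfd.analyticOnNhd hU_open
  have hga : AnalyticOnNhd ℂ g U := hgd.analyticOnNhd hU_open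
  have hconn : IsPreconnected U := (convex_halfSpace_re_gt 0).isPreconnected
  have h1U : (1:ℂ) ∈ U := by simp [hU]
  have hreal : ∀ r : ℝ, 0 < r → f r = g r := by
    intro r hr
    have := Complex.integral_cpow_mul_exp_neg_mul_Ioi ha hr
    rw [hf, hg]
    simp only [neg_mul]
    rw [this]
    have harg : Complex.arg r ≠ Real.pi := by
      rw [Complex.arg_ofReal_of_nonneg hr.le]
      exact fun h => Real.pi_ne_zero h.symm
    rw [Complex.cpow_neg, one_div, Complex.inv_cpow _ _ harg, mul_comm]
  have hfreq : ∃ᶠ z in nhdsWithin 1 {(1:ℂ)}ᶜ, f z = g z := by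
    have htend : Filter.Tendsto (fun n : ℕ => ((1 + (n+1:ℝ)⁻¹ : ℝ) : ℂ)) Filter.atTop
        (nhdsWithin 1 {(1:ℂ)}ᶜ) := by
      rw [tendsto_nhdsWithin_iff]
      constructor
      · have : Filter.Tendsto (fun n : ℕ => (1 + (n+1:ℝ)⁻¹ : ℝ)) Filter.atTop (nhds 1) := by
          have := tendsto_one_div_add_atTop_nhds_zero_nat (𝕜 := ℝ)
          simp only [one_div] at this
          simpa using (tendsto_const_nhds (x := (1:ℝ))).add this
        have h2 := (Complex.continuous_ofReal.tendsto 1).comp this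
        simpa [Function.comp_def] using h2
      · filter_upwards with n
        simp only [Set.mem_compl_iff, Set.mem_singleton_iff]
        intro h
        have : (1 + (n+1:ℝ)⁻¹ : ℝ) = 1 := by exact_mod_cast h
        have hn : (0:ℝ) < (n+1:ℝ)⁻¹ := by positivity
        linarith
    apply htend.frequently
    apply Filter.Frequently.of_forall
    intro n
    exact hreal _ (by positivity)
  have := hfa.eqOn_of_preconnected_of_frequently_eq hga hconn h1U hfreq
  exact this hs

lemma Gamma_shift (z : ℂ) (hz : 0 < z.re) (n : ℕ) :
    Complex.Gamma (z + n) = Complex.Gamma z * pochC z n := by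
  induction n with
  | zero => simp [pochC]
  | succ n ih =>
    have hne : z + n ≠ 0 := by
      intro h
      have := congrArg Complex.re h
      simp only [Complex.add_re, Complex.natCast_re, Complex.zero_re] at this
      have : (0:ℝ) ≤ (n:ℝ) := Nat.cast_nonneg n
      linarith [Nat.cast_nonneg (α := ℝ) n, hz]
    have h1 : z + (n+1:ℕ) = (z + n) + 1 := by push_cast; ring
    have h2 : pochC z (n+1) = pochC z n * (z + n) := by
      rw [pochC, pochC, Finset.prod_range_succ]
    rw [h1, Complex.Gamma_add_one _ hne, ih, h2]
    ring

lemma pochC_ne_zero_of_re_pos {z : ℂ} (hz : 0 < z.re) (i : ℕ) : pochC z i ≠ 0 := by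
  rw [pochC]
  apply Finset.prod_ne_zero_iff.mpr
  intro t _
  intro h
  have := congrArg Complex.re h
  simp only [Complex.add_re, Complex.natCast_re, Complex.zero_re] at this
  linarith [Nat.cast_nonneg (α := ℝ) t]

lemma pochC_split (z : ℂ) (i m : ℕ) :
    pochC z (i + m) = pochC z i * ∏ t ∈ Finset.range m, (z + i + t) := by
  rw [pochC, pochC, Finset.prod_range_add]
  congr 1
  apply Finset.prod_congr rfl
  intro t _
  push_cast
  ring

lemma pochC_neg_nat (i m : ℕ) :
    pochC (-((i+m:ℕ) : ℂ)) i = (-1)^i * ((i+m).descFactorial i : ℂ) := by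
  have hconst : ((-1:ℂ))^i = ∏ _t ∈ Finset.range i, (-1:ℂ) := by simp
  rw [pochC, Nat.descFactorial_eq_prod_range, Nat.cast_prod, hconst, ← Finset.prod_mul_distrib]
  apply Finset.prod_congr rfl
  intro t ht
  rw [Finset.mem_range] at ht
  have h1 : t ≤ i + m := by omega
  rw [Nat.cast_sub h1]
  push_cast
  ring

lemma genBinom_reverse (α : ℝ) (i m : ℕ) :
    genBinom ((i+m : ℕ) + α) m = (∏ t ∈ Finset.range m, (α + 1 + i + t)) / (Nat.factorial m) := by
  rw [genBinom]
  congr 1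
  rw [← Finset.prod_range_reflect (fun t => α + 1 + i + t) m]
  apply Finset.prod_congr rfl
  intro t ht
  rw [Finset.mem_range] at ht
  have h1 : 1 + t ≤ m := by omega
  rw [Nat.sub_sub, Nat.cast_sub h1]
  push_cast
  ring

lemma term_eq (β s : ℂ) (hβ : -1 < β.re) (hs : 0 < s.re) (α : ℝ) (hα : -1 < α) (i m : ℕ) :
    (((-1:ℝ)^i * genBinom (((i+m:ℕ) : ℝ) + α) m / (Nat.factorial i) : ℝ) : ℂ)
      * (Complex.Gamma (β + i + 1) * s ^ (-(β + i + 1)))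
    = Complex.Gamma (β + 1) * Complex.Gamma ((α : ℂ) + (i+m:ℕ) + 1) /
        ((Nat.factorial (i+m)) * Complex.Gamma ((α : ℂ) + 1))
        * s ^ (-(β + 1))
        * (pochC (-((i+m:ℕ) : ℂ)) i * pochC (β + 1) i /
            (pochC ((α : ℂ) + 1) i * (Nat.factorial i)) * (1 / s) ^ i) := by
  have hsne : s ≠ 0 := fun h => by simp [h] at hs
  have hβ1 : 0 < (β + 1).re := by simp only [Complex.add_re, Complex.one_re]; linarith
  have hα1 : 0 < ((α:ℂ) + 1).re := by
    simp only [Complex.add_re, Complex.ofReal_re, Complex.one_re]; linarith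
  have h1 : Complex.Gamma (β + i + 1) = Complex.Gamma (β + 1) * pochC (β + 1) i := by
    have h := Gamma_shift (β + 1) hβ1 i
    rw [show β + 1 + (i:ℂ) = β + i + 1 by ring] at h
    exact h
  have h2 : Complex.Gamma ((α:ℂ) + (i+m:ℕ) + 1)
      = Complex.Gamma ((α:ℂ) + 1) *
        (pochC ((α:ℂ)+1) i * ∏ t ∈ Finset.range m, ((α:ℂ) + 1 + i + t)) := by
    have h := Gamma_shift ((α:ℂ) + 1) hα1 (i + m)
    rw [pochC_split] at h
    rw [show (α:ℂ) + (i+m:ℕ) + 1 = (α:ℂ) + 1 + ((i+m:ℕ):ℂ) by ring, h]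
  have h3 : s ^ (-(β + i + 1)) = s ^ (-(β + 1)) * (1 / s) ^ i := by
    rw [show -(β + i + 1) = -(β+1) + (-(i:ℂ)) by ring, Complex.cpow_add _ _ hsne]
    congr 1
    rw [Complex.cpow_neg, Complex.cpow_natCast, one_div, inv_pow]
  have h4 := pochC_neg_nat i m
  have h5 : ((Nat.factorial (i+m)) : ℂ) = ((i+m).descFactorial i : ℂ) * (Nat.factorial m : ℂ) := by
    have e : i + m - i = m := by omega
    rw [← Nat.factorial_mul_descFactorial (Nat.le_add_right i m), e]
    push_cast
    ring
  have h6 : ((genBinom (((i+m:ℕ):ℝ) + α) m : ℝ) : ℂ)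
      = (∏ t ∈ Finset.range m, ((α:ℂ) + 1 + i + t)) / (Nat.factorial m : ℂ) := by
    rw [genBinom_reverse]
    push_cast
    ring
  have hQ : ((i+m).descFactorial i : ℂ) ≠ 0 := by
    rw [Nat.cast_ne_zero]
    intro h
    have := Nat.descFactorial_eq_zero_iff_lt.mp h
    omega
  have hfi : ((Nat.factorial i : ℕ) : ℂ) ≠ 0 := Nat.cast_ne_zero.mpr (Nat.factorial_ne_zero i)
  have hfm : ((Nat.factorial m : ℕ) : ℂ) ≠ 0 := Nat.cast_ne_zero.mpr (Nat.factorial_ne_zero m)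
  have hGα : Complex.Gamma ((α:ℂ) + 1) ≠ 0 := Complex.Gamma_ne_zero_of_re_pos hα1
  have hpα : pochC ((α:ℂ)+1) i ≠ 0 := pochC_ne_zero_of_re_pos hα1 i
  rw [h1, h2, h3, h4, h5]
  simp only [Complex.ofReal_div, Complex.ofReal_mul, Complex.ofReal_pow, Complex.ofReal_neg,
    Complex.ofReal_one, Complex.ofReal_natCast, h6]
  field_simp

end Aux

theorem laguerre_laplace_transform (β s : ℂ) (hβ : -1 < β.re) (hs : 0 < s.re)
    (α : ℝ) (hα : -1 < α) (j : ℕ) :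
    ∫ x in Set.Ioi (0 : ℝ), Complex.exp (-s * x) * (x : ℂ) ^ β * (lag j α x : ℂ)
      = Complex.Gamma (β + 1) * Complex.Gamma ((α : ℂ) + j + 1) /
          ((Nat.factorial j) * Complex.Gamma ((α : ℂ) + 1))
          * s ^ (-(β + 1))
          * hyp2F1C j (β + 1) ((α : ℂ) + 1) (1 / s) := by
  have hsne : s ≠ 0 := fun h => by simp [h] at hs
  have hre : ∀ i : ℕ, 0 < (β + i + 1).re := by
    intro i
    simp only [Complex.add_re, Complex.natCast_re, Complex.one_re]
    have : (0:ℝ) ≤ i := Nat.cast_nonneg i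
    linarith
  have hint : ∀ i : ℕ, IntegrableOn
      (fun x : ℝ => (x:ℂ) ^ ((β + i + 1) - 1) * Complex.exp (-s * x)) (Set.Ioi 0) :=
    fun i => integrableOn_cpow_cexp _ s (hre i) hs
  have hsimp : ∀ i:ℕ, (β + i + 1) - 1 = β + i := fun i => by ring
  have hcong : Set.EqOn (fun x : ℝ => Complex.exp (-s * x) * (x : ℂ) ^ β * (lag j α x : ℂ))
      (fun x : ℝ => ∑ i ∈ Finset.range (j+1),
        (((-1:ℝ)^i * genBinom ((j:ℝ)+α) (j-i) / (Nat.factorial i) : ℝ) : ℂ)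
        * ((x:ℂ) ^ (β + i) * Complex.exp (-s * x))) (Set.Ioi 0) := by
    intro x hx
    have hx0 : (x:ℂ) ≠ 0 := by
      simp only [ne_eq, Complex.ofReal_eq_zero]
      exact ne_of_gt hx
    simp only [lag]
    push_cast
    rw [Finset.mul_sum]
    apply Finset.sum_congr rfl
    intro i _
    rw [Complex.cpow_add _ _ hx0, Complex.cpow_natCast]
    ring
  rw [MeasureTheory.setIntegral_congr_fun measurableSet_Ioi hcong]
  rw [MeasureTheory.integral_finset_sum]
  swap
  · intro i _
    have := (hint i).const_mul
      (((-1:ℝ)^i * genBinom ((j:ℝ)+α) (j-i) / (Nat.factorial i) : ℝ) : ℂ)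
    simpa [hsimp i] using this
  have heval : ∀ i ∈ Finset.range (j+1),
      ∫ x in Set.Ioi (0:ℝ), (((-1:ℝ)^i * genBinom ((j:ℝ)+α) (j-i) / (Nat.factorial i) : ℝ) : ℂ)
        * ((x:ℂ) ^ (β + i) * Complex.exp (-s * x))
      = (((-1:ℝ)^i * genBinom ((j:ℝ)+α) (j-i) / (Nat.factorial i) : ℝ) : ℂ)
        * (Complex.Gamma (β + i + 1) * s ^ (-(β + i + 1))) := by
    intro i _
    rw [integral_const_mul]
    congr 1
    have h := integral_cpow_cexp (β + i + 1) (hre i) hs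
    rw [hsimp i] at h
    exact h
  rw [Finset.sum_congr rfl heval]
  rw [hyp2F1C, Finset.mul_sum]
  apply Finset.sum_congr rfl
  intro i hi
  rw [Finset.mem_range] at hi
  obtain ⟨m, rfl⟩ : ∃ m, j = i + m := ⟨j - i, by omega⟩
  have hm : i + m - i = m := by omega
  rw [hm]
  exact term_eq β s hβ hs α hα i m
end

section
/- For integers n ≥ 1, l ≥ 0, s = 2 and k ≥ 0, ∫_0^∞ x^{n+l-1} e^{-2x} L_k^{(n-1)}(x) dx = Γ(n+l) Γ(n+k) / (k! Γ(n)) · 2^{-(n+l)} · ₂F₁(-k, n+l; n; 1/2). -/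
open scoped BigOperators
open MeasureTheory Real

noncomputable def poch (a : ℝ) (i : ℕ) : ℝ := ∏ t ∈ Finset.range i, (a + t)

/-- Terminating Gauss hypergeometric sum `₂F₁(-k, b; c; x)`. -/
noncomputable def hyp2F1 (k : ℕ) (b c x : ℝ) : ℝ :=
  ∑ i ∈ Finset.range (k + 1),
    poch (-(k : ℝ)) i * poch b i / (poch c i * (Nat.factorial i)) * x ^ i

lemma poch_pos {a : ℝ} (ha : 0 < a) (i : ℕ) : 0 < poch a i :=
  Finset.prod_pos fun t _ => by positivity

lemma poch_add (a : ℝ) (i j : ℕ) : poch a (i + j) = poch a i * poch (a + i) j := by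
  unfold poch
  rw [Finset.prod_range_add]
  congr 1
  refine Finset.prod_congr rfl fun t _ => ?_
  push_cast; ring

lemma Gamma_add_nat {x : ℝ} (hx : 0 < x) (m : ℕ) :
    Real.Gamma (x + m) = poch x m * Real.Gamma x := by
  induction m with
  | zero => simp [poch]
  | succ m ih =>
    have h1 : x + ((m : ℝ) + 1) = (x + m) + 1 := by ring
    have h2 : x + (m : ℝ) ≠ 0 := by positivity
    have hp : poch x (m + 1) = poch x m * (x + m) := Finset.prod_range_succ _ m
    rw [show ((m + 1 : ℕ) : ℝ) = (m : ℝ) + 1 by push_cast; ring, h1,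
      Real.Gamma_add_one h2, ih, hp]
    ring

lemma poch_neg_mul (k : ℕ) : ∀ i ≤ k, poch (-(k : ℝ)) i * ((k - i).factorial : ℝ)
    = (-1 : ℝ) ^ i * (k.factorial : ℝ) := by
  intro i
  induction i with
  | zero => simp [poch]
  | succ i ih =>
    intro h
    have hi : i ≤ k := Nat.le_of_succ_le h
    have hki : k - i = (k - (i + 1)) + 1 := by omega
    have hc : ((k - i : ℕ) : ℝ) = (k : ℝ) - i := by
      push_cast [Nat.cast_sub hi]; ring
    have hne : ((k - i : ℕ) : ℝ) ≠ 0 := by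
      rw [hc]
      have : (i : ℝ) < k := by exact_mod_cast Nat.lt_of_succ_le h
      linarith
    apply mul_left_cancel₀ hne
    have ihh := ih hi
    rw [hki, Nat.factorial_succ] at ihh
    have hc2 : ((k - (i + 1) : ℕ) : ℝ) + 1 = (k : ℝ) - i := by
      rw [Nat.cast_sub h]; push_cast; ring
    push_cast at ihh ⊢
    rw [hc2] at ihh
    have hp : poch (-(k:ℝ)) (i + 1) = poch (-(k:ℝ)) i * (-(k:ℝ) + i) := Finset.prod_range_succ _ i
    rw [hc, hp]
    linear_combination ((i : ℝ) - k) * ihh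

lemma genBinom_eq (n i k : ℕ) (h : i ≤ k) :
    genBinom ((k : ℝ) + ((n : ℝ) - 1)) (k - i)
      = poch ((n : ℝ) + i) (k - i) / ((k - i).factorial : ℝ) := by
  unfold genBinom poch
  congr 1
  rw [← Finset.prod_range_reflect (fun t => (n : ℝ) + i + t) (k - i)]
  refine Finset.prod_congr rfl fun t ht => ?_
  have ht' : t < k - i := Finset.mem_range.mp ht
  have h1 : (k - i - 1 - t : ℕ) = k - (i + 1 + t) := by omega
  have h2 : i + 1 + t ≤ k := by omega
  rw [h1, Nat.cast_sub h2]
  push_cast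
  ring

lemma term_eq_s6 (n l k i : ℕ) (hn : 1 ≤ n) (hik : i ≤ k) :
    (-1 : ℝ) ^ i * genBinom ((k : ℝ) + ((n : ℝ) - 1)) (k - i) / (i.factorial : ℝ) *
      ((1 / 2 : ℝ) ^ ((n : ℝ) + l + i) * Real.Gamma ((n : ℝ) + l + i))
    = Real.Gamma ((n : ℝ) + l) * Real.Gamma ((n : ℝ) + k) /
        ((k.factorial : ℝ) * Real.Gamma n) * 2 ^ (-((n : ℝ) + l)) *
      (poch (-(k : ℝ)) i * poch ((n : ℝ) + l) i / (poch (n : ℝ) i * (i.factorial : ℝ))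
        * (1 / 2 : ℝ) ^ i) := by
  have hn0 : (0 : ℝ) < n := by exact_mod_cast hn
  have hnl : (0 : ℝ) < (n : ℝ) + l := by positivity
  -- rpow splitting
  have hpow : (1 / 2 : ℝ) ^ ((n : ℝ) + l + i) = 2 ^ (-((n : ℝ) + l)) * (1 / 2 : ℝ) ^ i := by
    rw [show ((n : ℝ) + l + i) = ((n : ℝ) + l) + (i : ℝ) from rfl,
      Real.rpow_add (by norm_num : (0:ℝ) < 1/2), Real.rpow_natCast]
    congr 1
    rw [one_div, Real.inv_rpow (by norm_num : (0:ℝ) ≤ 2), ← Real.rpow_neg (by norm_num : (0:ℝ) ≤ 2)]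
  -- Gamma rewrites
  have hG1 : Real.Gamma ((n : ℝ) + l + i) = poch ((n : ℝ) + l) i * Real.Gamma ((n : ℝ) + l) :=
    Gamma_add_nat hnl i
  have hG2 : Real.Gamma ((n : ℝ) + k)
      = poch (n : ℝ) i * poch ((n : ℝ) + i) (k - i) * Real.Gamma n := by
    rw [Gamma_add_nat hn0 k, show k = i + (k - i) by omega, poch_add]
    rw [show i + (k - i) = k by omega]
  have hBin := genBinom_eq n i k hik
  have hPC := poch_neg_mul k i hik
  -- nonvanishing
  have hGn : Real.Gamma (n : ℝ) ≠ 0 := (Real.Gamma_pos_of_pos hn0).ne'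
  have hGnl : Real.Gamma ((n : ℝ) + l) ≠ 0 := (Real.Gamma_pos_of_pos hnl).ne'
  have hpi : poch (n : ℝ) i ≠ 0 := (poch_pos hn0 i).ne'
  have hif : (i.factorial : ℝ) ≠ 0 := Nat.cast_ne_zero.mpr i.factorial_ne_zero
  have hkf : (k.factorial : ℝ) ≠ 0 := Nat.cast_ne_zero.mpr k.factorial_ne_zero
  have hkif : ((k - i).factorial : ℝ) ≠ 0 := Nat.cast_ne_zero.mpr (k - i).factorial_ne_zero
  have hPC' : poch (-(k : ℝ)) i = (-1 : ℝ) ^ i * (k.factorial : ℝ) / ((k - i).factorial : ℝ) := by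
    rw [eq_div_iff hkif]; exact hPC
  rw [hpow, hG1, hG2, hBin, hPC']
  field_simp

theorem laguerre_monomial_integral (n : ℕ) (hn : 1 ≤ n) (l k : ℕ) :
    ∫ x in Set.Ioi (0 : ℝ),
        x ^ ((n : ℝ) + l - 1) * Real.exp (-2 * x) * lag k ((n : ℝ) - 1) x
      = Real.Gamma ((n : ℝ) + l) * Real.Gamma ((n : ℝ) + k) /
          ((Nat.factorial k) * Real.Gamma n) * 2 ^ (-((n : ℝ) + l))
          * hyp2F1 k ((n : ℝ) + l) (n : ℝ) (1 / 2) := by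
  have hn0 : (0 : ℝ) < n := by exact_mod_cast hn
  -- rewrite the integrand as a finite sum of Gamma-type integrands
  have key : Set.EqOn
      (fun x : ℝ => x ^ ((n : ℝ) + l - 1) * Real.exp (-2 * x) * lag k ((n : ℝ) - 1) x)
      (fun x : ℝ => ∑ i ∈ Finset.range (k + 1),
        ((-1 : ℝ) ^ i * genBinom ((k : ℝ) + ((n : ℝ) - 1)) (k - i) / (i.factorial : ℝ)) *
          (x ^ ((n : ℝ) + l + i - 1) * Real.exp (-(2 * x))))
      (Set.Ioi (0 : ℝ)) := by
    intro x hx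
    have hx0 : (0 : ℝ) < x := hx
    simp only [lag, Finset.mul_sum]
    refine Finset.sum_congr rfl fun i _ => ?_
    have hxp : x ^ ((n : ℝ) + l + i - 1) = x ^ ((n : ℝ) + l - 1) * x ^ (i : ℕ) := by
      rw [← Real.rpow_natCast x i, ← Real.rpow_add hx0]
      ring_nf
    rw [hxp]
    rw [show (-(2 * x)) = -2 * x by ring]
    ring
  rw [setIntegral_congr_fun measurableSet_Ioi key]
  have hint : ∀ i : ℕ, IntegrableOn
      (fun x : ℝ => x ^ ((n : ℝ) + l + i - 1) * Real.exp (-(2 * x))) (Set.Ioi 0) := by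
    intro i
    have h := integrableOn_rpow_mul_exp_neg_mul_rpow
      (show (-1 : ℝ) < (n : ℝ) + l + i - 1 by
        have : (1 : ℝ) ≤ n := by exact_mod_cast hn
        linarith [Nat.cast_nonneg (α := ℝ) l, Nat.cast_nonneg (α := ℝ) i])
      (zero_lt_one' ℝ) (show (0 : ℝ) < 2 by norm_num)
    simpa [Real.rpow_one, neg_mul] using h
  rw [MeasureTheory.integral_finset_sum _
    (fun i _ => ((hint i).const_mul _))]
  have hval : ∀ i : ℕ, ∫ x in Set.Ioi (0 : ℝ),
      x ^ ((n : ℝ) + l + i - 1) * Real.exp (-(2 * x))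
      = (1 / 2 : ℝ) ^ ((n : ℝ) + l + i) * Real.Gamma ((n : ℝ) + l + i) := by
    intro i
    exact integral_rpow_mul_exp_neg_mul_Ioi
      (by positivity) (by norm_num)
  rw [hyp2F1, Finset.mul_sum]
  refine Finset.sum_congr rfl fun i hi => ?_
  rw [integral_const_mul, hval i]
  exact term_eq_s6 n l k i hn (Nat.lt_succ_iff.mp (Finset.mem_range.mp hi))
end

section
/- For a nonnegative integer m and integer n ≥ 1, the square of the Laguerre polynomial L_m^{(n-1)}(x) equals Σ_{l=0}^{2m} σ_l · x^l / l!, where σ_l = (-1)^l Σ_{i=0}^{l} binomial(l,i) · binomial(n+m-1, m-l+i) · binomial(n+m-1, m-i). -/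
open scoped BigOperators

/-- `Nat.choose` with an integer lower index, zero when the index is negative. -/
def chooseZ (a : ℕ) (k : ℤ) : ℕ :=
  if k < 0 then 0 else a.choose k.toNat

/-- The coefficients `σ_l^{n,m}`. -/
noncomputable def sigma' (n m l : ℕ) : ℝ :=
  (-1 : ℝ) ^ l *
    ∑ i ∈ Finset.range (l + 1),
      (Nat.choose l i) * (chooseZ (n + m - 1) ((m : ℤ) - l + i)) * (chooseZ (n + m - 1) ((m : ℤ) - i))

lemma prod_range_cast_sub (N k : ℕ) :
    ∏ i ∈ Finset.range k, ((N : ℝ) - i) = N.descFactorial k := by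
  induction k with
  | zero => simp
  | succ k ih =>
    rw [Finset.prod_range_succ, ih, Nat.descFactorial_succ]
    by_cases h : k ≤ N
    · push_cast [Nat.cast_sub h]
      ring
    · push_neg at h
      rw [Nat.descFactorial_eq_zero_iff_lt.2 h]
      push_cast
      ring

lemma genBinom_nat_s8 (N k : ℕ) : genBinom (N : ℝ) k = N.choose k := by
  rw [genBinom, prod_range_cast_sub, Nat.descFactorial_eq_factorial_mul_choose]
  have hk : (Nat.factorial k : ℝ) ≠ 0 := Nat.cast_ne_zero.2 (Nat.factorial_ne_zero k)
  push_cast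
  field_simp

theorem laguerre_square_monomial_expansion (n : ℕ) (hn : 1 ≤ n) (m : ℕ) (x : ℝ) :
    (lag m ((n : ℝ) - 1) x) ^ 2
      = ∑ l ∈ Finset.range (2 * m + 1), sigma' n m l * x ^ l / (Nat.factorial l) := by
  classical
  set c : ℕ → ℝ := fun i =>
    (-1 : ℝ) ^ i * (chooseZ (n + m - 1) ((m : ℤ) - i) : ℝ) / (Nat.factorial i) with hc
  -- c vanishes above m
  have hczero : ∀ i, m < i → c i = 0 := by
    intro i hi
    have : ((m : ℤ) - i) < 0 := by
      have : (m : ℤ) < i := by exact_mod_cast hi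
      omega
    simp only [hc]
    rw [chooseZ, if_pos this]
    simp
  -- step 1 : lag as sum with coefficients c
  have hlag : lag m ((n : ℝ) - 1) x = ∑ i ∈ Finset.range (m + 1), c i * x ^ i := by
    unfold lag
    refine Finset.sum_congr rfl ?_
    intro i hi
    have hi' : i ≤ m := Nat.lt_succ_iff.1 (Finset.mem_range.1 hi)
    have hcast : (m : ℝ) + ((n : ℝ) - 1) = ((n + m - 1 : ℕ) : ℝ) := by
      have h1 : 1 ≤ n + m := le_trans hn (Nat.le_add_right n m)
      push_cast [Nat.cast_sub h1]
      ring
    have hcz : chooseZ (n + m - 1) ((m : ℤ) - i) = (n + m - 1).choose (m - i) := by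
      have h0 : ¬ ((m : ℤ) - i < 0) := by
        push_neg
        omega
      have h1 : ((m : ℤ) - i).toNat = m - i := by omega
      simp [chooseZ, h0, h1]
    rw [hcast, genBinom_nat_s8, hc]
    simp only [hcz]
    ring
  -- the polynomial
  set p : Polynomial ℝ := ∑ i ∈ Finset.range (m + 1), Polynomial.C (c i) * Polynomial.X ^ i
    with hp
  have hcoeff : ∀ k, p.coeff k = c k := by
    intro k
    rw [hp, Polynomial.finset_sum_coeff]
    simp only [Polynomial.coeff_C_mul, Polynomial.coeff_X_pow, mul_ite, mul_one, mul_zero]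
    rw [Finset.sum_ite_eq (Finset.range (m + 1)) k c]
    by_cases hk : k ∈ Finset.range (m + 1)
    · simp [hk]
    · have : m < k := by
        simpa [Nat.lt_succ_iff, not_le] using (fun h => hk (Finset.mem_range.2 (Nat.lt_succ_of_le h)))
      simp [hk, hczero k this]
  have hdeg : p.natDegree ≤ m := by
    rw [Polynomial.natDegree_le_iff_coeff_eq_zero]
    intro N hN
    rw [hcoeff]
    exact hczero N hN
  have heval : p.eval x = ∑ i ∈ Finset.range (m + 1), c i * x ^ i := by
    rw [hp]
    simp [Polynomial.eval_finset_sum]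
  have hdeg2 : (p * p).natDegree < 2 * m + 1 := by
    calc (p * p).natDegree ≤ p.natDegree + p.natDegree := Polynomial.natDegree_mul_le
    _ ≤ m + m := add_le_add hdeg hdeg
    _ < 2 * m + 1 := by omega
  have hsq : (lag m ((n : ℝ) - 1) x) ^ 2
      = ∑ l ∈ Finset.range (2 * m + 1), (p * p).coeff l * x ^ l := by
    rw [hlag, ← heval, ← Polynomial.eval_eq_sum_range' hdeg2, Polynomial.eval_mul, sq]
  rw [hsq]
  refine Finset.sum_congr rfl ?_
  intro l hl
  have hcoefmul : (p * p).coeff l = ∑ i ∈ Finset.range (l + 1), c i * c (l - i) := by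
    rw [Polynomial.coeff_mul, Finset.Nat.sum_antidiagonal_eq_sum_range_succ_mk]
    simp [hcoeff]
  rw [hcoefmul]
  have hkey : (∑ i ∈ Finset.range (l + 1), c i * c (l - i))
      = sigma' n m l / (Nat.factorial l) := by
    rw [sigma']
    push_cast
    rw [Finset.mul_sum, Finset.sum_div]
    refine Finset.sum_congr rfl ?_
    intro i hi
    have hil : i ≤ l := Nat.lt_succ_iff.1 (Finset.mem_range.1 hi)
    have hfac : (Nat.factorial i : ℝ) ≠ 0 := Nat.cast_ne_zero.2 (Nat.factorial_ne_zero i)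
    have hfac2 : (Nat.factorial (l - i) : ℝ) ≠ 0 := Nat.cast_ne_zero.2 (Nat.factorial_ne_zero _)
    have hfacl : (Nat.factorial l : ℝ) ≠ 0 := Nat.cast_ne_zero.2 (Nat.factorial_ne_zero l)
    have hchoose : (l.choose i : ℝ)
        = (Nat.factorial l) / (Nat.factorial i * Nat.factorial (l - i)) :=
      Nat.cast_choose ℝ hil
    have hcz : chooseZ (n + m - 1) ((m : ℤ) - ((l - i : ℕ) : ℤ))
        = chooseZ (n + m - 1) ((m : ℤ) - l + i) := by
      congr 1
      omega
    have hsign : (-1 : ℝ) ^ i * (-1 : ℝ) ^ (l - i) = (-1 : ℝ) ^ l := by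
      rw [← pow_add]
      congr 1
      omega
    simp only [hc]
    rw [hcz, hchoose, div_mul_div_comm,
      show (-1 : ℝ) ^ i * ↑(chooseZ (n + m - 1) ((m : ℤ) - ↑i)) *
        ((-1 : ℝ) ^ (l - i) * ↑(chooseZ (n + m - 1) ((m : ℤ) - ↑l + ↑i)))
        = ((-1 : ℝ) ^ i * (-1 : ℝ) ^ (l - i)) *
          (↑(chooseZ (n + m - 1) ((m : ℤ) - ↑l + ↑i)) * ↑(chooseZ (n + m - 1) ((m : ℤ) - ↑i)))
        from by ring, hsign]
    field_simp
  rw [hkey]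
  ring
end
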